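/- arXiv:2410.24067 — 4 statements merged into one kernel-verified Lean document; each statement's English description precedes it below -/
import Mathlib

section
/- Let J be a diagram and (M_w, M_z) the pair of isometries defined by J on H_J. Then: (a) ker M_w* is the closed span of {e_p : p ∈ J_VB}; (b) ker M_z* is the closed span of {e_p : p ∈ J_HB}; (c) ker M_w* ∩ ker M_z* is the closed span of {e_p : p ∈ J_outer}; (d) M_w(ker M_z*) ∩ M_z(ker M_w*) is the closed span of {e_p : p ∈ J_inner}; (e) ker M_w*M_z* is the closed span of {e_p : p ∈ J_border}, where J_border = J_HB ∪ J_VB ∪ J_inner. -/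
open scoped ENNReal ComplexConjugate InnerProductSpace
open Filter

noncomputable section

namespace TaylorDiagram

/-- A diagram: a subset of ℤ² closed under adding ℕ². -/
def IsDiagram (J : Set (ℤ × ℤ)) : Prop :=
  ∀ p ∈ J, ∀ k l : ℕ, (p.1 + (k : ℤ), p.2 + (l : ℤ)) ∈ J

/-- Translate of a set of ℤ² by a vector. -/
def tr (v : ℤ × ℤ) (J : Set (ℤ × ℤ)) : Set (ℤ × ℤ) :=
  (fun p => (v.1 + p.1, v.2 + p.2)) '' J

def Equivalent (J₁ J₂ : Set (ℤ × ℤ)) : Prop := ∃ v : ℤ × ℤ, J₁ = tr v J₂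

/-- Simple diagrams: translation equivalent to ℤ², ℤ₊², ℤ₊×ℤ or ℤ×ℤ₊. -/
def Simple (J : Set (ℤ × ℤ)) : Prop :=
  Equivalent J Set.univ ∨ Equivalent J {p | 0 < p.1 ∧ 0 < p.2} ∨
    Equivalent J {p | 0 < p.1} ∨ Equivalent J {p | 0 < p.2}

/-- The Hilbert space ℓ²(J). -/
abbrev HJ (J : Set (ℤ × ℤ)) : Type := lp (fun _ : J => ℂ) 2

/-- Canonical orthonormal basis vectors of ℓ²(J). -/
def e (J : Set (ℤ × ℤ)) (p : J) : HJ J := lp.single 2 p 1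

/-- `Mw` is the horizontal shift on ℓ²(J). -/
def IsShiftW (J : Set (ℤ × ℤ)) (Mw : HJ J →L[ℂ] HJ J) : Prop :=
  ∀ (p : ℤ × ℤ) (hp : p ∈ J) (hp' : (p.1 + 1, p.2) ∈ J),
    Mw (e J ⟨p, hp⟩) = e J ⟨(p.1 + 1, p.2), hp'⟩

/-- `Mz` is the vertical shift on ℓ²(J). -/
def IsShiftZ (J : Set (ℤ × ℤ)) (Mz : HJ J →L[ℂ] HJ J) : Prop :=
  ∀ (p : ℤ × ℤ) (hp : p ∈ J) (hp' : (p.1, p.2 + 1) ∈ J),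
    Mz (e J ⟨p, hp⟩) = e J ⟨(p.1, p.2 + 1), hp'⟩

section Conditions

variable {H : Type*} [NormedAddCommGroup H] [InnerProductSpace ℂ H]

/-- Condition (T1) of exactness of the Koszul complex. -/
def CondT1 (A B : H →L[ℂ] H) : Prop :=
  LinearMap.ker (A : H →ₗ[ℂ] H) ⊓ LinearMap.ker (B : H →ₗ[ℂ] H) = ⊥

/-- Condition (T2) of exactness of the Koszul complex. -/
def CondT2 (A B : H →L[ℂ] H) : Prop :=
  ∀ h₁ h₂ : H, A h₂ = B h₁ → ∃ h : H, h₁ = A h ∧ h₂ = B h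

/-- Condition (T3) of exactness of the Koszul complex. -/
def CondT3 (A B : H →L[ℂ] H) : Prop :=
  LinearMap.range (A : H →ₗ[ℂ] H) ⊔ LinearMap.range (B : H →ₗ[ℂ] H) = ⊤

/-- Exactness of the (short) Koszul complex of a pair. -/
def KoszulExact (A B : H →L[ℂ] H) : Prop :=
  CondT1 A B ∧ CondT2 A B ∧ CondT3 A B

/-- The Taylor spectrum of a commuting pair. -/
def taylorSpectrum (A B : H →L[ℂ] H) : Set (ℂ × ℂ) :=
  {p | ¬ KoszulExact (p.1 • (1 : H →L[ℂ] H) - A) (p.2 • (1 : H →L[ℂ] H) - B)}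

/-- Γ₂: the set of points where (T2) fails. -/
def Gamma2 (A B : H →L[ℂ] H) : Set (ℂ × ℂ) :=
  {p | ¬ CondT2 (p.1 • (1 : H →L[ℂ] H) - A) (p.2 • (1 : H →L[ℂ] H) - B)}

/-- Γ₃: the set of points where (T3) fails. -/
def Gamma3 (A B : H →L[ℂ] H) : Set (ℂ × ℂ) :=
  {p | ¬ CondT3 (p.1 • (1 : H →L[ℂ] H) - A) (p.2 • (1 : H →L[ℂ] H) - B)}

end Conditions

/-- Vertical border of a diagram. -/
def JVB (J : Set (ℤ × ℤ)) : Set (ℤ × ℤ) := {p | p ∈ J ∧ (p.1 - 1, p.2) ∉ J}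

/-- Horizontal border of a diagram. -/
def JHB (J : Set (ℤ × ℤ)) : Set (ℤ × ℤ) := {p | p ∈ J ∧ (p.1, p.2 - 1) ∉ J}

/-- Outer corners of a diagram. -/
def Jouter (J : Set (ℤ × ℤ)) : Set (ℤ × ℤ) := JHB J ∩ JVB J

/-- Inner corners of a diagram. -/
def Jinner (J : Set (ℤ × ℤ)) : Set (ℤ × ℤ) :=
  {p | p ∈ J ∧ (p.1 - 1, p.2) ∈ J ∧ (p.1, p.2 - 1) ∈ J ∧ (p.1 - 1, p.2 - 1) ∉ J}

/-- Border of a diagram. -/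
def Jborder (J : Set (ℤ × ℤ)) : Set (ℤ × ℤ) := JHB J ∪ JVB J ∪ Jinner J

/-- The basis vectors of `ℓ²(J)` indexed by a subset `S` of `ℤ²`. -/
def basisVecs (J : Set (ℤ × ℤ)) (S : Set (ℤ × ℤ)) : Set (HJ J) :=
  e J '' {p : J | (p : ℤ × ℤ) ∈ S}


/-! ### Auxiliary machinery -/

section Aux

open scoped Classical

variable {J : Set (ℤ × ℤ)}

lemma aux_inner_e_left (p : J) (x : HJ J) : ⟪e J p, x⟫_ℂ = x p := by
  classical
  rw [e, lp.inner_single_left]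
  simp [RCLike.inner_apply]

lemma aux_inner_e_right (p : J) (x : HJ J) : ⟪x, e J p⟫_ℂ = conj (x p) := by
  rw [← inner_conj_symm, aux_inner_e_left]

lemma aux_e_apply (p q : J) : (e J p) q = if q = p then 1 else 0 := by
  classical
  rw [e, lp.single_apply]
  split_ifs with h <;> simp [h]

lemma aux_ext_coord {x y : HJ J} (h : ∀ p, x p = y p) : x = y := lp.ext (funext h)

lemma aux_coord_congr (x : HJ J) {a b : ℤ × ℤ} (ha : a ∈ J) (hb : b ∈ J) (h : a = b) :
    x ⟨a, ha⟩ = x ⟨b, hb⟩ := by subst h; rfl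

/-- Elements of `ℓ²(J)` supported in `S`. -/
def suppIn (J S : Set (ℤ × ℤ)) : Submodule ℂ (HJ J) where
  carrier := {x | ∀ p : J, (p : ℤ × ℤ) ∉ S → x p = 0}
  add_mem' := fun {a b} ha hb p hp => by simp [lp.coeFn_add, ha p hp, hb p hp]
  zero_mem' := fun p _ => by simp [lp.coeFn_zero]
  smul_mem' := fun c x hx p hp => by simp [lp.coeFn_smul, hx p hp]

lemma mem_suppIn {S : Set (ℤ × ℤ)} {x : HJ J} :
    x ∈ suppIn J S ↔ ∀ p : J, (p : ℤ × ℤ) ∉ S → x p = 0 := Iff.rfl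

lemma aux_e_mem_suppIn {S : Set (ℤ × ℤ)} {p : J} (hp : (p : ℤ × ℤ) ∈ S) :
    e J p ∈ suppIn J S := by
  intro q hq
  have hqp : q ≠ p := by rintro rfl; exact hq hp
  exact lp.single_apply_ne 2 p 1 hqp

lemma aux_orth_span (S : Set (ℤ × ℤ)) :
    (Submodule.span ℂ (basisVecs J S))ᗮ = suppIn J Sᶜ := by
  ext x
  constructor
  · intro hx p hp
    have hmem : e J p ∈ basisVecs J S := ⟨p, by simpa using hp, rfl⟩
    have := (Submodule.mem_orthogonal _ x).mp hx _ (Submodule.subset_span hmem)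
    rwa [aux_inner_e_left] at this
  · intro hx
    rw [Submodule.mem_orthogonal']
    intro u hu
    have hle : Submodule.span ℂ (basisVecs J S) ≤ LinearMap.ker (innerSL ℂ x : HJ J →ₗ[ℂ] ℂ) := by
      rw [Submodule.span_le]
      rintro _ ⟨p, hp, rfl⟩
      have hxp : x p = 0 := hx p (by simpa using hp)
      simp [LinearMap.mem_ker, innerSL_apply_apply, aux_inner_e_right, hxp]
    exact hle hu

lemma aux_orth_suppIn (T : Set (ℤ × ℤ)) : (suppIn J T)ᗮ = suppIn J Tᶜ := by
  ext x
  constructor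
  · intro hx p hp
    have hp' : (p : ℤ × ℤ) ∈ T := not_not.mp hp
    have := (Submodule.mem_orthogonal _ x).mp hx _ (aux_e_mem_suppIn hp')
    rwa [aux_inner_e_left] at this
  · intro hx
    rw [Submodule.mem_orthogonal]
    intro u hu
    rw [lp.inner_eq_tsum]
    have key : ∀ p : J, ⟪u p, x p⟫_ℂ = 0 := by
      intro p
      rcases em ((p : ℤ × ℤ) ∈ T) with h | h
      · have : x p = 0 := hx p (by simpa using h)
        simp [this]
      · have : u p = 0 := hu p h
        simp [this]
    have h0 : ∀ p : J, (starRingEnd ℂ) (u p) * x p = 0 := by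
      intro p; have := key p; simp [RCLike.inner_apply] at this ⊢; tauto
    simp only [key, tsum_zero]

lemma span_closure (S : Set (ℤ × ℤ)) :
    (Submodule.span ℂ (basisVecs J S)).topologicalClosure = suppIn J S := by
  rw [← Submodule.orthogonal_orthogonal_eq_closure, aux_orth_span, aux_orth_suppIn,
    compl_compl]

lemma right_mem (hJ : IsDiagram J) {p : ℤ × ℤ} (hp : p ∈ J) : (p.1 + 1, p.2) ∈ J := by
  simpa using hJ p hp 1 0

lemma up_mem (hJ : IsDiagram J) {p : ℤ × ℤ} (hp : p ∈ J) : (p.1, p.2 + 1) ∈ J := by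
  simpa using hJ p hp 0 1

lemma adjW_apply (hJ : IsDiagram J) {Mw : HJ J →L[ℂ] HJ J} (hMw : IsShiftW J Mw)
    (x : HJ J) (p : J) :
    (ContinuousLinearMap.adjoint Mw x) p =
      x ⟨((p : ℤ × ℤ).1 + 1, (p : ℤ × ℤ).2), right_mem hJ p.2⟩ := by
  rw [← aux_inner_e_left p, ContinuousLinearMap.adjoint_inner_right]
  have : Mw (e J p) = e J ⟨((p : ℤ × ℤ).1 + 1, (p : ℤ × ℤ).2), right_mem hJ p.2⟩ :=
    hMw (p : ℤ × ℤ) p.2 _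
  rw [this, aux_inner_e_left]

lemma adjZ_apply (hJ : IsDiagram J) {Mz : HJ J →L[ℂ] HJ J} (hMz : IsShiftZ J Mz)
    (x : HJ J) (p : J) :
    (ContinuousLinearMap.adjoint Mz x) p =
      x ⟨((p : ℤ × ℤ).1, (p : ℤ × ℤ).2 + 1), up_mem hJ p.2⟩ := by
  rw [← aux_inner_e_left p, ContinuousLinearMap.adjoint_inner_right]
  have : Mz (e J p) = e J ⟨((p : ℤ × ℤ).1, (p : ℤ × ℤ).2 + 1), up_mem hJ p.2⟩ :=
    hMz (p : ℤ × ℤ) p.2 _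
  rw [this, aux_inner_e_left]

lemma adjW_e (hJ : IsDiagram J) {Mw : HJ J →L[ℂ] HJ J} (hMw : IsShiftW J Mw) (q : J) :
    ContinuousLinearMap.adjoint Mw (e J q) =
      if h : ((q : ℤ × ℤ).1 - 1, (q : ℤ × ℤ).2) ∈ J then e J ⟨_, h⟩ else 0 := by
  apply aux_ext_coord
  intro p
  rw [adjW_apply hJ hMw]
  split_ifs with h
  · rw [aux_e_apply, aux_e_apply]
    congr 1
    simp only [eq_iff_iff, Subtype.ext_iff, Prod.ext_iff]
    constructor
    · rintro ⟨h1, h2⟩; constructor <;> omega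
    · rintro ⟨h1, h2⟩; constructor <;> omega
  · have hne : (⟨((p : ℤ × ℤ).1 + 1, (p : ℤ × ℤ).2), right_mem hJ p.2⟩ : J) ≠ q := by
      intro hc
      apply h
      rw [← hc]
      simpa using p.2
    rw [aux_e_apply, if_neg hne]
    simp [lp.coeFn_zero]

lemma adjZ_e (hJ : IsDiagram J) {Mz : HJ J →L[ℂ] HJ J} (hMz : IsShiftZ J Mz) (q : J) :
    ContinuousLinearMap.adjoint Mz (e J q) =
      if h : ((q : ℤ × ℤ).1, (q : ℤ × ℤ).2 - 1) ∈ J then e J ⟨_, h⟩ else 0 := by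
  apply aux_ext_coord
  intro p
  rw [adjZ_apply hJ hMz]
  split_ifs with h
  · rw [aux_e_apply, aux_e_apply]
    congr 1
    simp only [eq_iff_iff, Subtype.ext_iff, Prod.ext_iff]
    constructor
    · rintro ⟨h1, h2⟩; constructor <;> omega
    · rintro ⟨h1, h2⟩; constructor <;> omega
  · have hne : (⟨((p : ℤ × ℤ).1, (p : ℤ × ℤ).2 + 1), up_mem hJ p.2⟩ : J) ≠ q := by
      intro hc
      apply h
      rw [← hc]
      simpa using p.2
    rw [aux_e_apply, if_neg hne]
    simp [lp.coeFn_zero]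

lemma Mw_apply (hJ : IsDiagram J) {Mw : HJ J →L[ℂ] HJ J} (hMw : IsShiftW J Mw)
    (x : HJ J) (q : J) :
    (Mw x) q = if h : ((q : ℤ × ℤ).1 - 1, (q : ℤ × ℤ).2) ∈ J then x ⟨_, h⟩ else 0 := by
  rw [← aux_inner_e_left q, ← ContinuousLinearMap.adjoint_inner_left, adjW_e hJ hMw]
  split_ifs with h
  · rw [aux_inner_e_left]
  · simp

lemma Mz_apply (hJ : IsDiagram J) {Mz : HJ J →L[ℂ] HJ J} (hMz : IsShiftZ J Mz)
    (x : HJ J) (q : J) :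
    (Mz x) q = if h : ((q : ℤ × ℤ).1, (q : ℤ × ℤ).2 - 1) ∈ J then x ⟨_, h⟩ else 0 := by
  rw [← aux_inner_e_left q, ← ContinuousLinearMap.adjoint_inner_left, adjZ_e hJ hMz]
  split_ifs with h
  · rw [aux_inner_e_left]
  · simp

lemma kerW_eq (hJ : IsDiagram J) {Mw : HJ J →L[ℂ] HJ J} (hMw : IsShiftW J Mw) :
    LinearMap.ker (ContinuousLinearMap.adjoint Mw : HJ J →ₗ[ℂ] HJ J) = suppIn J (JVB J) := by
  ext x
  rw [LinearMap.mem_ker, ContinuousLinearMap.coe_coe, mem_suppIn]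
  constructor
  · intro h0 q hq
    have hm : ((q : ℤ × ℤ).1 - 1, (q : ℤ × ℤ).2) ∈ J := by
      by_contra hc; exact hq ⟨q.2, hc⟩
    have h1 : (ContinuousLinearMap.adjoint Mw x) ⟨_, hm⟩ = 0 := by
      rw [h0]; simp [lp.coeFn_zero]
    rw [adjW_apply hJ hMw] at h1
    have h2 := aux_coord_congr x q.2 (right_mem hJ hm)
      (by simp)
    rw [Subtype.coe_eta] at h2
    exact h2.trans h1
  · intro hx
    apply aux_ext_coord
    intro p
    rw [adjW_apply hJ hMw]
    have h0 : (((p : ℤ × ℤ).1 + 1, (p : ℤ × ℤ).2)) ∉ JVB J := by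
      rintro ⟨-, hno⟩
      apply hno
      simpa using p.2
    rw [hx _ h0]
    simp [lp.coeFn_zero]

lemma kerZ_eq (hJ : IsDiagram J) {Mz : HJ J →L[ℂ] HJ J} (hMz : IsShiftZ J Mz) :
    LinearMap.ker (ContinuousLinearMap.adjoint Mz : HJ J →ₗ[ℂ] HJ J) = suppIn J (JHB J) := by
  ext x
  rw [LinearMap.mem_ker, ContinuousLinearMap.coe_coe, mem_suppIn]
  constructor
  · intro h0 q hq
    have hm : ((q : ℤ × ℤ).1, (q : ℤ × ℤ).2 - 1) ∈ J := by
      by_contra hc; exact hq ⟨q.2, hc⟩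
    have h1 : (ContinuousLinearMap.adjoint Mz x) ⟨_, hm⟩ = 0 := by
      rw [h0]; simp [lp.coeFn_zero]
    rw [adjZ_apply hJ hMz] at h1
    have h2 := aux_coord_congr x q.2 (up_mem hJ hm)
      (by simp)
    rw [Subtype.coe_eta] at h2
    exact h2.trans h1
  · intro hx
    apply aux_ext_coord
    intro p
    rw [adjZ_apply hJ hMz]
    have h0 : (((p : ℤ × ℤ).1, (p : ℤ × ℤ).2 + 1)) ∉ JHB J := by
      rintro ⟨-, hno⟩
      apply hno
      simpa using p.2
    rw [hx _ h0]
    simp [lp.coeFn_zero]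

lemma suppIn_inf (S T : Set (ℤ × ℤ)) :
    suppIn J S ⊓ suppIn J T = suppIn J (S ∩ T) := by
  ext x
  rw [Submodule.mem_inf, mem_suppIn, mem_suppIn, mem_suppIn]
  constructor
  · rintro ⟨h1, h2⟩ p hp
    rcases not_and_or.mp hp with h | h
    · exact h1 p h
    · exact h2 p h
  · intro h
    exact ⟨fun p hp => h p (fun hc => hp hc.1), fun p hp => h p (fun hc => hp hc.2)⟩

lemma map_inf_eq (hJ : IsDiagram J) {Mw Mz : HJ J →L[ℂ] HJ J}
    (hMw : IsShiftW J Mw) (hMz : IsShiftZ J Mz) :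
    Submodule.map (Mw : HJ J →ₗ[ℂ] HJ J) (suppIn J (JHB J)) ⊓ Submodule.map (Mz : HJ J →ₗ[ℂ] HJ J) (suppIn J (JVB J)) =
      suppIn J (Jinner J) := by
  apply le_antisymm
  · intro x hx
    obtain ⟨hx1, hx2⟩ := Submodule.mem_inf.mp hx
    obtain ⟨y, hy, hyx⟩ := Submodule.mem_map.mp hx1
    obtain ⟨z, hz, hzx⟩ := Submodule.mem_map.mp hx2
    intro q hq
    by_cases h1 : ((q : ℤ × ℤ).1 - 1, (q : ℤ × ℤ).2) ∈ J
    · by_cases h2 : ((q : ℤ × ℤ).1, (q : ℤ × ℤ).2 - 1) ∈ J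
      · have h3 : ((q : ℤ × ℤ).1 - 1, (q : ℤ × ℤ).2 - 1) ∈ J := by
          by_contra hc; exact hq ⟨q.2, h1, h2, hc⟩
        rw [← hyx, ContinuousLinearMap.coe_coe, Mw_apply hJ hMw, dif_pos h1]
        apply hy
        rintro ⟨-, hno⟩
        exact hno h3
      · rw [← hzx, ContinuousLinearMap.coe_coe, Mz_apply hJ hMz, dif_neg h2]
    · rw [← hyx, ContinuousLinearMap.coe_coe, Mw_apply hJ hMw, dif_neg h1]
  · intro x hx
    refine Submodule.mem_inf.mpr ⟨?_, ?_⟩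
    · refine Submodule.mem_map.mpr ⟨ContinuousLinearMap.adjoint Mw x, ?_, ?_⟩
      · intro p hp
        rw [adjW_apply hJ hMw]
        apply hx
        rintro ⟨-, -, -, hno⟩
        apply hno
        have hp2 : ((p : ℤ × ℤ).1, (p : ℤ × ℤ).2 - 1) ∈ J := by
          by_contra hc; exact hp ⟨p.2, hc⟩
        simpa using hp2
      · apply aux_ext_coord
        intro q
        rw [ContinuousLinearMap.coe_coe, Mw_apply hJ hMw]
        split_ifs with h
        · rw [adjW_apply hJ hMw]
          exact aux_coord_congr x _ q.2
            (by simp)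
        · exact (hx q (fun hmem => h hmem.2.1)).symm
    · refine Submodule.mem_map.mpr ⟨ContinuousLinearMap.adjoint Mz x, ?_, ?_⟩
      · intro p hp
        rw [adjZ_apply hJ hMz]
        apply hx
        rintro ⟨-, -, -, hno⟩
        apply hno
        have hp1 : ((p : ℤ × ℤ).1 - 1, (p : ℤ × ℤ).2) ∈ J := by
          by_contra hc; exact hp ⟨p.2, hc⟩
        simpa using hp1
      · apply aux_ext_coord
        intro q
        rw [ContinuousLinearMap.coe_coe, Mz_apply hJ hMz]
        split_ifs with h
        · rw [adjZ_apply hJ hMz]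
          exact aux_coord_congr x _ q.2
            (by simp)
        · exact (hx q (fun hmem => h hmem.2.2.1)).symm

lemma kerWZ_eq (hJ : IsDiagram J) {Mw Mz : HJ J →L[ℂ] HJ J}
    (hMw : IsShiftW J Mw) (hMz : IsShiftZ J Mz) :
    LinearMap.ker
        ((ContinuousLinearMap.adjoint Mw ∘L ContinuousLinearMap.adjoint Mz : HJ J →L[ℂ] HJ J) : HJ J →ₗ[ℂ] HJ J) =
      suppIn J (Jborder J) := by
  ext x
  rw [LinearMap.mem_ker, ContinuousLinearMap.coe_coe, mem_suppIn]
  constructor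
  · intro h0 q hq
    have h2 : ((q : ℤ × ℤ).1, (q : ℤ × ℤ).2 - 1) ∈ J := by
      by_contra hc; exact hq (Or.inl (Or.inl ⟨q.2, hc⟩))
    have h1 : ((q : ℤ × ℤ).1 - 1, (q : ℤ × ℤ).2) ∈ J := by
      by_contra hc; exact hq (Or.inl (Or.inr ⟨q.2, hc⟩))
    have h3 : ((q : ℤ × ℤ).1 - 1, (q : ℤ × ℤ).2 - 1) ∈ J := by
      by_contra hc; exact hq (Or.inr ⟨q.2, h1, h2, hc⟩)
    have hcoord :
        ((ContinuousLinearMap.adjoint Mw ∘L ContinuousLinearMap.adjoint Mz) x)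
            ⟨_, h3⟩ = 0 := by
      rw [h0]; simp [lp.coeFn_zero]
    rw [ContinuousLinearMap.comp_apply, adjW_apply hJ hMw, adjZ_apply hJ hMz] at hcoord
    have h4 := aux_coord_congr x q.2 (up_mem hJ (right_mem hJ h3))
      (show (q : ℤ × ℤ) =
        (((q : ℤ × ℤ).1 - 1) + 1, ((q : ℤ × ℤ).2 - 1) + 1) by simp)
    rw [Subtype.coe_eta] at h4
    exact h4.trans hcoord
  · intro hx
    apply aux_ext_coord
    intro p
    rw [ContinuousLinearMap.comp_apply, adjW_apply hJ hMw, adjZ_apply hJ hMz]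
    have h0 : (((p : ℤ × ℤ).1 + 1, (p : ℤ × ℤ).2 + 1)) ∉ Jborder J := by
      rintro ((⟨-, hno⟩ | ⟨-, hno⟩) | ⟨-, -, -, hno⟩)
      · exact hno (by simpa using right_mem hJ p.2)
      · exact hno (by simpa using up_mem hJ p.2)
      · exact hno (by simpa using p.2)
    rw [hx _ h0]
    simp [lp.coeFn_zero]

end Aux

/-- Description of the kernels of `M_w*`, `M_z*`, their intersection,
`M_w(ker M_z*) ∩ M_z(ker M_w*)` and `ker M_w*M_z*` for the pair of isometries
defined by a diagram `J`, in terms of the borders of `J`. -/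
theorem stmt3 (J : Set (ℤ × ℤ)) (hJ : IsDiagram J)
    (Mw Mz : HJ J →L[ℂ] HJ J) (hMw : IsShiftW J Mw) (hMz : IsShiftZ J Mz) :
    LinearMap.ker (ContinuousLinearMap.adjoint Mw : HJ J →ₗ[ℂ] HJ J) =
      (Submodule.span ℂ (basisVecs J (JVB J))).topologicalClosure ∧
    LinearMap.ker (ContinuousLinearMap.adjoint Mz : HJ J →ₗ[ℂ] HJ J) =
      (Submodule.span ℂ (basisVecs J (JHB J))).topologicalClosure ∧
    LinearMap.ker (ContinuousLinearMap.adjoint Mw : HJ J →ₗ[ℂ] HJ J) ⊓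
        LinearMap.ker (ContinuousLinearMap.adjoint Mz : HJ J →ₗ[ℂ] HJ J) =
      (Submodule.span ℂ (basisVecs J (Jouter J))).topologicalClosure ∧
    Submodule.map (Mw : HJ J →ₗ[ℂ] HJ J) (LinearMap.ker (ContinuousLinearMap.adjoint Mz : HJ J →ₗ[ℂ] HJ J)) ⊓
        Submodule.map (Mz : HJ J →ₗ[ℂ] HJ J) (LinearMap.ker (ContinuousLinearMap.adjoint Mw : HJ J →ₗ[ℂ] HJ J)) =
      (Submodule.span ℂ (basisVecs J (Jinner J))).topologicalClosure ∧
    LinearMap.ker ((ContinuousLinearMap.adjoint Mw ∘L ContinuousLinearMap.adjoint Mz : HJ J →L[ℂ] HJ J) : HJ J →ₗ[ℂ] HJ J) =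
      (Submodule.span ℂ (basisVecs J (Jborder J))).topologicalClosure := by
  refine ⟨?_, ?_, ?_, ?_, ?_⟩
  · rw [span_closure]; exact kerW_eq hJ hMw
  · rw [span_closure]; exact kerZ_eq hJ hMz
  · rw [span_closure, kerW_eq hJ hMw, kerZ_eq hJ hMz, suppIn_inf]
    congr 1
    exact Set.inter_comm _ _
  · rw [span_closure, kerW_eq hJ hMw, kerZ_eq hJ hMz]
    exact map_inf_eq hJ hMw hMz
  · rw [span_closure]; exact kerWZ_eq hJ hMw hMz

end TaylorDiagram
end
end

section
/- Let J be a diagram and (M_w, M_z) the pair of isometries defined by J on H_J. Then the defect operator C(M_w,M_z) = I − M_wM_w* − M_zM_z* + M_wM_zM_z*M_w* equals P_outer − P_inner, where P_outer is the orthogonal projection onto the closed span of {e_p : p ∈ J_outer} and P_inner is the orthogonal projection onto the closed span of {e_p : p ∈ J_inner}. -/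
open scoped ENNReal ComplexConjugate InnerProductSpace
open Filter

noncomputable section

namespace TaylorDiagram

section Helpers

variable {J : Set (ℤ × ℤ)}

lemma coord (f : HJ J) (p : J) : ⟪e J p, f⟫_ℂ = f p := by
  classical
  rw [e, lp.inner_single_left]
  simp

lemma inner_e (p q : J) : ⟪e J p, e J q⟫_ℂ = if p = q then 1 else 0 := by
  classical
  rw [coord]
  by_cases h : p = q
  · subst h; rw [if_pos rfl, e, lp.single_apply_self]
  · rw [if_neg h]; exact lp.single_apply_ne _ _ _ h

lemma ext_e {f g : HJ J} (h : ∀ p : J, ⟪e J p, f⟫_ℂ = ⟪e J p, g⟫_ℂ) : f = g := by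
  refine lp.ext (funext fun p => ?_)
  have := h p
  rwa [coord, coord] at this

lemma dense_span_e :
    Dense ((Submodule.span ℂ (Set.range (e J)) : Submodule ℂ (HJ J)) : Set (HJ J)) := by
  rw [Submodule.dense_iff_topologicalClosure_eq_top, Submodule.topologicalClosure_eq_top_iff]
  rw [eq_bot_iff]
  intro x hx
  rw [Submodule.mem_orthogonal] at hx
  rw [Submodule.mem_bot]
  refine ext_e fun p => ?_
  rw [inner_zero_right]
  exact hx _ (Submodule.subset_span ⟨p, rfl⟩)

lemma mem_span_orth {S : Set (HJ J)} {x : HJ J} (h : ∀ s ∈ S, ⟪s, x⟫_ℂ = 0) :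
    x ∈ (Submodule.span ℂ S)ᗮ := by
  rw [Submodule.mem_orthogonal]
  intro u hu
  induction hu using Submodule.span_induction with
  | mem s hs => exact h s hs
  | zero => simp
  | add a b _ _ ha hb => rw [inner_add_left, ha, hb, add_zero]
  | smul c a _ ha => rw [inner_smul_left, ha, mul_zero]

lemma closure_orth (K : Submodule ℂ (HJ J)) : (K.topologicalClosure)ᗮ = Kᗮ := by
  rw [← Submodule.orthogonal_orthogonal_eq_closure, Submodule.triorthogonal_eq_orthogonal]

lemma proj_unique {K : Submodule ℂ (HJ J)} {x y y' : HJ J}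
    (hy : y ∈ K) (hxy : x - y ∈ Kᗮ) (hy' : y' ∈ K) (hxy' : x - y' ∈ Kᗮ) : y = y' := by
  have h1 : y - y' ∈ K := sub_mem hy hy'
  have h2 : y - y' ∈ Kᗮ := by
    have h3 : y - y' = (x - y') - (x - y) := by abel
    rw [h3]; exact sub_mem hxy' hxy
  have h4 := Submodule.inner_right_of_mem_orthogonal h1 h2
  rw [inner_self_eq_zero, sub_eq_zero] at h4
  exact h4

lemma e_eq {p : ℤ × ℤ} {hp : p ∈ J} {q : J} (h : p = (q : ℤ × ℤ)) : e J ⟨p, hp⟩ = e J q := by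
  cases q with | mk v hv => subst h; rfl

lemma mem_right (hJ : IsDiagram J) (q : J) : ((q : ℤ × ℤ).1 + 1, (q : ℤ × ℤ).2) ∈ J := by
  have := hJ q q.2 1 0
  simpa using this

lemma mem_up (hJ : IsDiagram J) (q : J) : ((q : ℤ × ℤ).1, (q : ℤ × ℤ).2 + 1) ∈ J := by
  have := hJ q q.2 0 1
  simpa using this

lemma shiftW_apply (hJ : IsDiagram J) {Mw : HJ J →L[ℂ] HJ J} (hMw : IsShiftW J Mw) (q : J) :
    Mw (e J q) = e J ⟨((q : ℤ × ℤ).1 + 1, (q : ℤ × ℤ).2), mem_right hJ q⟩ :=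
  hMw q q.2 (mem_right hJ q)

lemma shiftZ_apply (hJ : IsDiagram J) {Mz : HJ J →L[ℂ] HJ J} (hMz : IsShiftZ J Mz) (q : J) :
    Mz (e J q) = e J ⟨((q : ℤ × ℤ).1, (q : ℤ × ℤ).2 + 1), mem_up hJ q⟩ :=
  hMz q q.2 (mem_up hJ q)

lemma adjW [DecidablePred (· ∈ J)] (hJ : IsDiagram J) {Mw : HJ J →L[ℂ] HJ J}
    (hMw : IsShiftW J Mw) (q : J) :
    ContinuousLinearMap.adjoint Mw (e J q) =
      if h : ((q : ℤ × ℤ).1 - 1, (q : ℤ × ℤ).2) ∈ J then e J ⟨_, h⟩ else 0 := by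
  refine ext_e fun p => ?_
  rw [ContinuousLinearMap.adjoint_inner_right, shiftW_apply hJ hMw, inner_e]
  by_cases h : ((q : ℤ × ℤ).1 - 1, (q : ℤ × ℤ).2) ∈ J
  · rw [dif_pos h, inner_e]
    congr 1
    simp only [eq_iff_iff]
    constructor
    · intro he
      apply Subtype.ext
      have := congrArg (Subtype.val) he
      simp only [Prod.ext_iff] at this ⊢
      omega
    · intro he
      apply Subtype.ext
      have := congrArg (Subtype.val) he
      simp only [Prod.ext_iff] at this ⊢
      omega
  · rw [dif_neg h, inner_zero_right, if_neg]
    intro he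
    apply h
    have := congrArg (Subtype.val) he
    have h1 : ((q : ℤ × ℤ).1 - 1, (q : ℤ × ℤ).2) = (p : ℤ × ℤ) := by
      simp only [Prod.ext_iff] at this ⊢
      omega
    rw [h1]; exact p.2

lemma adjZ [DecidablePred (· ∈ J)] (hJ : IsDiagram J) {Mz : HJ J →L[ℂ] HJ J}
    (hMz : IsShiftZ J Mz) (q : J) :
    ContinuousLinearMap.adjoint Mz (e J q) =
      if h : ((q : ℤ × ℤ).1, (q : ℤ × ℤ).2 - 1) ∈ J then e J ⟨_, h⟩ else 0 := by
  refine ext_e fun p => ?_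
  rw [ContinuousLinearMap.adjoint_inner_right, shiftZ_apply hJ hMz, inner_e]
  by_cases h : ((q : ℤ × ℤ).1, (q : ℤ × ℤ).2 - 1) ∈ J
  · rw [dif_pos h, inner_e]
    congr 1
    simp only [eq_iff_iff]
    constructor
    · intro he
      apply Subtype.ext
      have := congrArg (Subtype.val) he
      simp only [Prod.ext_iff] at this ⊢
      omega
    · intro he
      apply Subtype.ext
      have := congrArg (Subtype.val) he
      simp only [Prod.ext_iff] at this ⊢
      omega
  · rw [dif_neg h, inner_zero_right, if_neg]
    intro he
    apply h
    have := congrArg (Subtype.val) he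
    have h1 : ((q : ℤ × ℤ).1, (q : ℤ × ℤ).2 - 1) = (p : ℤ × ℤ) := by
      simp only [Prod.ext_iff] at this ⊢
      omega
    rw [h1]; exact p.2

lemma proj_apply (S : Set (ℤ × ℤ)) [DecidablePred (· ∈ S)] (P : HJ J →L[ℂ] HJ J)
    (hP : ∀ x : HJ J, P x ∈ (Submodule.span ℂ (basisVecs J S)).topologicalClosure ∧
      x - P x ∈ ((Submodule.span ℂ (basisVecs J S)).topologicalClosure)ᗮ) (q : J) :
    P (e J q) = if (q : ℤ × ℤ) ∈ S then e J q else 0 := by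
  obtain ⟨h1, h2⟩ := hP (e J q)
  by_cases hq : (q : ℤ × ℤ) ∈ S
  · rw [if_pos hq]
    refine proj_unique h1 h2 ?_ ?_
    · exact Submodule.le_topologicalClosure _ (Submodule.subset_span ⟨q, hq, rfl⟩)
    · simp
  · rw [if_neg hq]
    refine proj_unique h1 h2 (zero_mem _) ?_
    rw [sub_zero, closure_orth]
    apply mem_span_orth
    rintro s ⟨p, hp, rfl⟩
    rw [inner_e, if_neg]
    rintro rfl
    exact hq hp

set_option synthInstance.maxHeartbeats 1000000 in
lemma t2HJ : T2Space (HJ J) := inferInstance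

end Helpers

/-- The defect operator `I − M_wM_w* − M_zM_z* + M_wM_zM_z*M_w*` of the pair of isometries
defined by a diagram `J` equals `P_outer − P_inner`, where `P_outer`, `P_inner` are the
orthogonal projections onto the closed spans of the basis vectors indexed by the outer,
resp. inner, corners of `J`. -/
theorem stmt4 (J : Set (ℤ × ℤ)) (hJ : IsDiagram J)
    (Mw Mz : HJ J →L[ℂ] HJ J) (hMw : IsShiftW J Mw) (hMz : IsShiftZ J Mz)
    (Pout Pin : HJ J →L[ℂ] HJ J)
    (hPout : ∀ x : HJ J,
      Pout x ∈ (Submodule.span ℂ (basisVecs J (Jouter J))).topologicalClosure ∧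
      x - Pout x ∈ ((Submodule.span ℂ (basisVecs J (Jouter J))).topologicalClosure)ᗮ)
    (hPin : ∀ x : HJ J,
      Pin x ∈ (Submodule.span ℂ (basisVecs J (Jinner J))).topologicalClosure ∧
      x - Pin x ∈ ((Submodule.span ℂ (basisVecs J (Jinner J))).topologicalClosure)ᗮ) :
    (1 : HJ J →L[ℂ] HJ J) - Mw ∘L ContinuousLinearMap.adjoint Mw
        - Mz ∘L ContinuousLinearMap.adjoint Mz
        + Mw ∘L Mz ∘L ContinuousLinearMap.adjoint Mz ∘L ContinuousLinearMap.adjoint Mw =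
      Pout - Pin := by
  classical
  haveI := t2HJ (J := J)
  refine ContinuousLinearMap.ext_on dense_span_e ?_
  rintro x ⟨q, rfl⟩
  simp only [ContinuousLinearMap.add_apply, ContinuousLinearMap.sub_apply,
    ContinuousLinearMap.comp_apply, ContinuousLinearMap.one_apply]
  rw [proj_apply (Jouter J) Pout hPout q, proj_apply (Jinner J) Pin hPin q]
  have hq := q.2
  have hca : ((q : ℤ × ℤ).1 - 1, (q : ℤ × ℤ).2 - 1) ∈ J → ((q : ℤ × ℤ).1 - 1, (q : ℤ × ℤ).2) ∈ J := by
    intro h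
    have h2 := hJ _ h 0 1
    have h3 : (((q : ℤ × ℤ).1 - 1, (q : ℤ × ℤ).2 - 1).1 + ((0 : ℕ) : ℤ),
        ((q : ℤ × ℤ).1 - 1, (q : ℤ × ℤ).2 - 1).2 + ((1 : ℕ) : ℤ)) =
        ((q : ℤ × ℤ).1 - 1, (q : ℤ × ℤ).2) := by
      simp only [Prod.ext_iff]; constructor <;> push_cast <;> ring
    rwa [h3] at h2
  have hcb : ((q : ℤ × ℤ).1 - 1, (q : ℤ × ℤ).2 - 1) ∈ J → ((q : ℤ × ℤ).1, (q : ℤ × ℤ).2 - 1) ∈ J := by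
    intro h
    have h2 := hJ _ h 1 0
    have h3 : (((q : ℤ × ℤ).1 - 1, (q : ℤ × ℤ).2 - 1).1 + ((1 : ℕ) : ℤ),
        ((q : ℤ × ℤ).1 - 1, (q : ℤ × ℤ).2 - 1).2 + ((0 : ℕ) : ℤ)) =
        ((q : ℤ × ℤ).1, (q : ℤ × ℤ).2 - 1) := by
      simp only [Prod.ext_iff]; constructor <;> push_cast <;> ring
    rwa [h3] at h2
  rw [adjW hJ hMw q, adjZ hJ hMz q]
  by_cases ha : ((q : ℤ × ℤ).1 - 1, (q : ℤ × ℤ).2) ∈ J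
  · have t2 : Mw (e J ⟨((q : ℤ × ℤ).1 - 1, (q : ℤ × ℤ).2), ha⟩) = e J q := by
      rw [shiftW_apply hJ hMw]
      exact e_eq (by refine Prod.ext_iff.mpr ⟨?_, ?_⟩ <;> simp <;> omega)
    by_cases hb : ((q : ℤ × ℤ).1, (q : ℤ × ℤ).2 - 1) ∈ J
    · have t3 : Mz (e J ⟨((q : ℤ × ℤ).1, (q : ℤ × ℤ).2 - 1), hb⟩) = e J q := by
        rw [shiftZ_apply hJ hMz]
        exact e_eq (by refine Prod.ext_iff.mpr ⟨?_, ?_⟩ <;> simp <;> omega)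
      by_cases hc : ((q : ℤ × ℤ).1 - 1, (q : ℤ × ℤ).2 - 1) ∈ J
      · have t4 : Mw (Mz (ContinuousLinearMap.adjoint Mz
            (e J ⟨((q : ℤ × ℤ).1 - 1, (q : ℤ × ℤ).2), ha⟩))) = e J q := by
          rw [adjZ hJ hMz, dif_pos hc, shiftZ_apply hJ hMz, shiftW_apply hJ hMw]
          exact e_eq (by refine Prod.ext_iff.mpr ⟨?_, ?_⟩ <;> simp <;> omega)
        rw [dif_pos ha, dif_pos hb, t2, t3, t4,
          if_neg (fun h => h.2.2 ha), if_neg (fun h => h.2.2.2 hc)]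
        abel
      · have t4 : Mw (Mz (ContinuousLinearMap.adjoint Mz
            (e J ⟨((q : ℤ × ℤ).1 - 1, (q : ℤ × ℤ).2), ha⟩))) = 0 := by
          rw [adjZ hJ hMz, dif_neg hc, map_zero, map_zero]
        have hmem : (q : ℤ × ℤ) ∈ Jinner J := ⟨hq, ha, hb, hc⟩
        rw [dif_pos ha, dif_pos hb, t2, t3, t4,
          if_neg (fun h => h.2.2 ha), if_pos hmem]
        abel
    · have hc : ((q : ℤ × ℤ).1 - 1, (q : ℤ × ℤ).2 - 1) ∉ J := fun h => hb (hcb h)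
      have t4 : Mw (Mz (ContinuousLinearMap.adjoint Mz
          (e J ⟨((q : ℤ × ℤ).1 - 1, (q : ℤ × ℤ).2), ha⟩))) = 0 := by
        rw [adjZ hJ hMz, dif_neg hc, map_zero, map_zero]
      rw [dif_pos ha, dif_neg hb, t2, t4, map_zero,
        if_neg (fun h => h.2.2 ha), if_neg (fun h => hb h.2.2.1)]
      abel
  · by_cases hb : ((q : ℤ × ℤ).1, (q : ℤ × ℤ).2 - 1) ∈ J
    · have t3 : Mz (e J ⟨((q : ℤ × ℤ).1, (q : ℤ × ℤ).2 - 1), hb⟩) = e J q := by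
        rw [shiftZ_apply hJ hMz]
        exact e_eq (by refine Prod.ext_iff.mpr ⟨?_, ?_⟩ <;> simp <;> omega)
      rw [dif_neg ha, dif_pos hb, t3, if_neg (fun h => h.1.2 hb), if_neg (fun h => ha h.2.1)]
      simp
    · have hmem : (q : ℤ × ℤ) ∈ Jouter J := ⟨⟨hq, hb⟩, ⟨hq, ha⟩⟩
      rw [dif_neg ha, dif_neg hb, if_pos hmem, if_neg (fun h => ha h.2.1)]
      simp

end TaylorDiagram
end
end

section
/- Let J be a diagram with ℕ² ⊆ J and (M_w, M_z) the pair of isometries defined by J on H_J. For any μ, λ ∈ ℂ with |μ| < 1 and |λ| < 1, the vector h = √((1−|μ|²)(1−|λ|²)) · Σ_{(i,j)∈ℕ²} μ^i λ^j e_{(i,j)} is a unit vector in H_J satisfying ⟨M_w h, h⟩ = conj(μ) and ⟨M_z h, h⟩ = conj(λ) (inner product linear in the first variable). Consequently the closure of the joint numerical range W(M_w,M_z) = {(⟨M_w x, x⟩, ⟨M_z x, x⟩) : x ∈ H_J, ‖x‖ = 1} equals the closed bidisc {(μ,λ) : |μ| ≤ 1, |λ| ≤ 1}. -/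
open scoped ENNReal ComplexConjugate InnerProductSpace
open Filter

noncomputable section

namespace TaylorDiagram

section Aux
variable {E : Type*} [NormedAddCommGroup E] [InnerProductSpace ℂ E]

lemma hasSum_inner_left_aux {ι : Type*} {w : ι → E} {a : ι → ℂ} {x : E}
    (hx : HasSum (fun i => a i • w i) x) (y : E) :
    HasSum (fun i => (starRingEnd ℂ) (a i) * ⟪w i, y⟫_ℂ) ⟪x, y⟫_ℂ := by
  have h1 : HasSum (fun i => ⟪y, a i • w i⟫_ℂ) ⟪y, x⟫_ℂ := hx.mapL (innerSL ℂ y)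
  have h2 := h1.map (starRingEnd ℂ) Complex.continuous_conj
  simp only [Function.comp_def, inner_conj_symm] at h2
  exact h2.congr_fun fun i => by rw [inner_smul_left]

lemma inner_of_hasSum_orthonormal {ι : Type*} {v : ι → E} (hv : Orthonormal ℂ v)
    {a : ι → ℂ} {x : E} (hx : HasSum (fun i => a i • v i) x) (i₀ : ι) :
    ⟪v i₀, x⟫_ℂ = a i₀ := by
  classical
  have h1 : HasSum (fun i => ⟪v i₀, a i • v i⟫_ℂ) ⟪v i₀, x⟫_ℂ := hx.mapL (innerSL ℂ (v i₀))
  have h2 : HasSum (fun i => if i = i₀ then a i₀ else 0) (a i₀) := hasSum_ite_eq i₀ (a i₀)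
  refine h1.unique (h2.congr_fun fun i => ?_)
  rw [inner_smul_right, orthonormal_iff_ite.mp hv i₀ i]
  rcases eq_or_ne i i₀ with rfl | hne
  · simp
  · simp [hne, Ne.symm hne]

lemma orthonormal_e (J : Set (ℤ × ℤ)) : Orthonormal ℂ (e J) := by
  rw [orthonormal_iff_ite]
  intro p p'
  rw [e, e, lp.inner_single_left]
  rcases eq_or_ne p p' with rfl | hne
  · simp [lp.single_apply_self]
  · simp [lp.single_apply_ne _ _ _ hne, hne]

end Aux

lemma main_core (J : Set (ℤ × ℤ))
    (hN : ∀ p : ℤ × ℤ, 0 ≤ p.1 → 0 ≤ p.2 → p ∈ J)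
    (Mw Mz : HJ J →L[ℂ] HJ J) (hMw : IsShiftW J Mw) (hMz : IsShiftZ J Mz)
    (μ ν : ℂ) (hμ : ‖μ‖ < 1) (hν : ‖ν‖ < 1) (h : HJ J)
    (hh : HasSum (fun q : ℕ × ℕ =>
      ((Real.sqrt ((1 - ‖μ‖ ^ 2) * (1 - ‖ν‖ ^ 2)) : ℂ) * (μ ^ q.1 * ν ^ q.2)) •
        e J ⟨((q.1 : ℤ), (q.2 : ℤ)),
          hN ((q.1 : ℤ), (q.2 : ℤ)) (Int.natCast_nonneg _) (Int.natCast_nonneg _)⟩) h) :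
    ‖h‖ = 1 ∧ ⟪h, Mw h⟫_ℂ = starRingEnd ℂ μ ∧ ⟪h, Mz h⟫_ℂ = starRingEnd ℂ ν := by
  set c : ℝ := Real.sqrt ((1 - ‖μ‖ ^ 2) * (1 - ‖ν‖ ^ 2)) with hc
  set A : ℕ × ℕ → ℂ := fun q => (c : ℂ) * (μ ^ q.1 * ν ^ q.2) with hA
  set ι : ℕ × ℕ → J := fun q => ⟨((q.1 : ℤ), (q.2 : ℤ)),
    hN ((q.1 : ℤ), (q.2 : ℤ)) (Int.natCast_nonneg _) (Int.natCast_nonneg _)⟩ with hiota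
  have hι : Function.Injective ι := by
    intro q q' hq
    simp only [hiota, Subtype.ext_iff, Prod.ext_iff, Int.natCast_inj] at hq
    exact Prod.ext hq.1 hq.2
  have hh' : HasSum (fun q => A q • e J (ι q)) h := hh
  have honb : Orthonormal ℂ (fun q : ℕ × ℕ => e J (ι q)) := (orthonormal_e J).comp ι hι
  have coef : ∀ q, ⟪e J (ι q), h⟫_ℂ = A q := fun q =>
    inner_of_hasSum_orthonormal honb hh' q
  have hμ2 : ‖μ‖ ^ 2 < 1 := by nlinarith [norm_nonneg μ]
  have hν2 : ‖ν‖ ^ 2 < 1 := by nlinarith [norm_nonneg ν]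
  have hμ0 : (0:ℝ) < 1 - ‖μ‖ ^ 2 := by nlinarith
  have hν0 : (0:ℝ) < 1 - ‖ν‖ ^ 2 := by nlinarith
  have hc0 : 0 ≤ c := Real.sqrt_nonneg _
  have hcsq : c ^ 2 = (1 - ‖μ‖ ^ 2) * (1 - ‖ν‖ ^ 2) := Real.sq_sqrt (by nlinarith)
  have hsumR : HasSum (fun q : ℕ × ℕ => c ^ 2 * ((‖μ‖ ^ 2) ^ q.1 * (‖ν‖ ^ 2) ^ q.2)) 1 := by
    have g1 := hasSum_geometric_of_lt_one (by positivity) hμ2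
    have g2 := hasSum_geometric_of_lt_one (by positivity) hν2
    have gp := g1.mul g2 (g1.summable.mul_of_nonneg g2.summable
      (fun _ => by positivity) (fun _ => by positivity))
    have heq : c ^ 2 * ((1 - ‖μ‖ ^ 2)⁻¹ * (1 - ‖ν‖ ^ 2)⁻¹) = 1 := by
      rw [hcsq, mul_mul_mul_comm, mul_inv_cancel₀ hμ0.ne', mul_inv_cancel₀ hν0.ne', one_mul]
    exact heq ▸ gp.mul_left (c ^ 2)
  have hAnorm : ∀ q : ℕ × ℕ, ‖A q‖ ^ 2 = c ^ 2 * ((‖μ‖ ^ 2) ^ q.1 * (‖ν‖ ^ 2) ^ q.2) := by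
    intro q
    simp only [hA, norm_mul, norm_pow, Complex.norm_real, Real.norm_eq_abs,
      abs_of_nonneg hc0]
    ring
  have hsumC : HasSum (fun q : ℕ × ℕ => (starRingEnd ℂ) (A q) * A q) 1 := by
    have h0 : HasSum (fun q : ℕ × ℕ =>
        ((c ^ 2 * ((‖μ‖ ^ 2) ^ q.1 * (‖ν‖ ^ 2) ^ q.2) : ℝ) : ℂ)) ((1 : ℝ) : ℂ) :=
      Complex.hasSum_ofReal.mpr hsumR
    rw [Complex.ofReal_one] at h0
    refine h0.congr_fun fun q => ?_
    rw [RCLike.conj_mul, ← hAnorm q]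
    norm_cast
  have hinner_hh : ⟪h, h⟫_ℂ = 1 := by
    have h1 := hasSum_inner_left_aux hh' h
    exact (h1.congr_fun fun q => by rw [coef q]).unique hsumC
  have hnorm : ‖h‖ = 1 := by
    have h2 := inner_self_eq_norm_sq_to_K (𝕜 := ℂ) h
    rw [hinner_hh] at h2
    have h3 : ‖h‖ ^ 2 = 1 := by
      rw [← RCLike.ofReal_pow, ← RCLike.ofReal_one (K := ℂ), RCLike.ofReal_inj] at h2
      exact h2.symm
    nlinarith [norm_nonneg h]
  -- shifted sums
  have hMwh : HasSum (fun q : ℕ × ℕ => A q • e J (ι (q.1 + 1, q.2))) (Mw h) := by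
    refine (hh'.mapL Mw).congr_fun fun q => ?_
    have hp' : ((q.1 : ℤ) + 1, (q.2 : ℤ)) ∈ J :=
      hN _ (by positivity) (Int.natCast_nonneg _)
    have e1 : ι (q.1 + 1, q.2) = (⟨((q.1 : ℤ) + 1, (q.2 : ℤ)), hp'⟩ : J) := by
      apply Subtype.ext
      simp only [hiota]
      push_cast
      rfl
    rw [map_smul]
    refine congrArg _ ?_
    rw [e1]
    exact (hMw ((q.1 : ℤ), (q.2 : ℤ)) (ι q).2 hp').symm
  have hMzh : HasSum (fun q : ℕ × ℕ => A q • e J (ι (q.1, q.2 + 1))) (Mz h) := by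
    refine (hh'.mapL Mz).congr_fun fun q => ?_
    have hp' : ((q.1 : ℤ), (q.2 : ℤ) + 1) ∈ J :=
      hN _ (Int.natCast_nonneg _) (by positivity)
    have e1 : ι (q.1, q.2 + 1) = (⟨((q.1 : ℤ), (q.2 : ℤ) + 1), hp'⟩ : J) := by
      apply Subtype.ext
      simp only [hiota]
      push_cast
      rfl
    rw [map_smul]
    refine congrArg _ ?_
    rw [e1]
    exact (hMz ((q.1 : ℤ), (q.2 : ℤ)) (ι q).2 hp').symm
  have hw : ⟪h, Mw h⟫_ℂ = starRingEnd ℂ μ := by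
    have h1 := hasSum_inner_left_aux hMwh h
    have h2 : HasSum (fun q : ℕ × ℕ => (starRingEnd ℂ) (A q) * A (q.1 + 1, q.2)) (μ * 1) := by
      refine (hsumC.mul_left μ).congr_fun fun q => ?_
      simp only [hA, pow_succ]
      ring
    have h1' : HasSum (fun q : ℕ × ℕ => (starRingEnd ℂ) (A q) * A (q.1 + 1, q.2)) ⟪Mw h, h⟫_ℂ :=
      h1.congr_fun fun q => by rw [coef (q.1 + 1, q.2)]
    have h3 : ⟪Mw h, h⟫_ℂ = μ * 1 := h1'.unique h2
    rw [← inner_conj_symm, h3, mul_one]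
  have hz : ⟪h, Mz h⟫_ℂ = starRingEnd ℂ ν := by
    have h1 := hasSum_inner_left_aux hMzh h
    have h2 : HasSum (fun q : ℕ × ℕ => (starRingEnd ℂ) (A q) * A (q.1, q.2 + 1)) (ν * 1) := by
      refine (hsumC.mul_left ν).congr_fun fun q => ?_
      simp only [hA, pow_succ]
      ring
    have h1' : HasSum (fun q : ℕ × ℕ => (starRingEnd ℂ) (A q) * A (q.1, q.2 + 1)) ⟪Mz h, h⟫_ℂ :=
      h1.congr_fun fun q => by rw [coef (q.1, q.2 + 1)]
    have h3 : ⟪Mz h, h⟫_ℂ = ν * 1 := h1'.unique h2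
    rw [← inner_conj_symm, h3, mul_one]
  exact ⟨hnorm, hw, hz⟩

lemma shift_norm (J : Set (ℤ × ℤ)) (M : HJ J →L[ℂ] HJ J) (σ : J → J)
    (hσ : Function.Injective σ) (hM : ∀ p : J, M (e J p) = e J (σ p)) (x : HJ J) :
    ‖M x‖ = ‖x‖ := by
  classical
  have hx : HasSum (fun p : J => (x p : ℂ) • e J p) x := by
    have h0 := lp.hasSum_single (E := fun _ : J => ℂ) ENNReal.ofNat_ne_top x
    refine h0.congr_fun fun p => ?_
    have hs : lp.single (E := fun _ : J => ℂ) 2 p ((x p) • (1 : ℂ)) =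
        (x p) • lp.single (E := fun _ : J => ℂ) 2 p 1 := lp.single_smul 2 p (x p) 1
    rw [e, ← hs, smul_eq_mul, mul_one]
  have hMx : HasSum (fun p : J => (x p : ℂ) • e J (σ p)) (M x) := by
    refine (hx.mapL M).congr_fun fun p => ?_
    rw [map_smul, hM p]
  have c1 : ∀ p, ⟪e J p, x⟫_ℂ = x p := fun p =>
    inner_of_hasSum_orthonormal (orthonormal_e J) hx p
  have honb : Orthonormal ℂ (fun p : J => e J (σ p)) := (orthonormal_e J).comp σ hσ
  have c2 : ∀ p, ⟪e J (σ p), M x⟫_ℂ = x p := fun p =>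
    inner_of_hasSum_orthonormal honb hMx p
  have h1 : HasSum (fun p : J => (starRingEnd ℂ) (x p) * x p) ⟪x, x⟫_ℂ :=
    (hasSum_inner_left_aux hx x).congr_fun fun p => by rw [c1 p]
  have h2 : HasSum (fun p : J => (starRingEnd ℂ) (x p) * x p) ⟪M x, M x⟫_ℂ :=
    (hasSum_inner_left_aux hMx (M x)).congr_fun fun p => by rw [c2 p]
  have h3 : ⟪M x, M x⟫_ℂ = ⟪x, x⟫_ℂ := h2.unique h1
  rw [inner_self_eq_norm_sq_to_K, inner_self_eq_norm_sq_to_K] at h3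
  have h6 : ‖M x‖ ^ 2 = ‖x‖ ^ 2 := by
    rw [← RCLike.ofReal_pow, ← RCLike.ofReal_pow, RCLike.ofReal_inj] at h3
    exact h3
  rw [← Real.sqrt_sq (norm_nonneg (M x)), h6, Real.sqrt_sq (norm_nonneg x)]

lemma exists_h (J : Set (ℤ × ℤ))
    (hN : ∀ p : ℤ × ℤ, 0 ≤ p.1 → 0 ≤ p.2 → p ∈ J)
    (μ ν : ℂ) (hμ : ‖μ‖ < 1) (hν : ‖ν‖ < 1) :
    ∃ h : HJ J, HasSum (fun q : ℕ × ℕ =>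
      ((Real.sqrt ((1 - ‖μ‖ ^ 2) * (1 - ‖ν‖ ^ 2)) : ℂ) * (μ ^ q.1 * ν ^ q.2)) •
        e J ⟨((q.1 : ℤ), (q.2 : ℤ)),
          hN ((q.1 : ℤ), (q.2 : ℤ)) (Int.natCast_nonneg _) (Int.natCast_nonneg _)⟩) h := by
  classical
  set c : ℝ := Real.sqrt ((1 - ‖μ‖ ^ 2) * (1 - ‖ν‖ ^ 2)) with hc
  set A : ℕ × ℕ → ℂ := fun q => (c : ℂ) * (μ ^ q.1 * ν ^ q.2) with hA
  set ι : ℕ × ℕ → J := fun q => ⟨((q.1 : ℤ), (q.2 : ℤ)),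
    hN ((q.1 : ℤ), (q.2 : ℤ)) (Int.natCast_nonneg _) (Int.natCast_nonneg _)⟩ with hiota
  have hι : Function.Injective ι := by
    intro q q' hq
    simp only [hiota, Subtype.ext_iff, Prod.ext_iff, Int.natCast_inj] at hq
    exact Prod.ext hq.1 hq.2
  have hμ2 : ‖μ‖ ^ 2 < 1 := by nlinarith [norm_nonneg μ]
  have hν2 : ‖ν‖ ^ 2 < 1 := by nlinarith [norm_nonneg ν]
  have hc0 : 0 ≤ c := Real.sqrt_nonneg _
  have hAnorm : ∀ q : ℕ × ℕ, ‖A q‖ ^ 2 = c ^ 2 * ((‖μ‖ ^ 2) ^ q.1 * (‖ν‖ ^ 2) ^ q.2) := by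
    intro q
    simp only [hA, norm_mul, norm_pow, Complex.norm_real, Real.norm_eq_abs,
      abs_of_nonneg hc0]
    ring
  have hsumA : Summable (fun q : ℕ × ℕ => ‖A q‖ ^ 2) := by
    have g1 := (hasSum_geometric_of_lt_one (by positivity) hμ2).summable
    have g2 := (hasSum_geometric_of_lt_one (by positivity) hν2).summable
    have gp := (g1.mul_of_nonneg g2 (fun _ => by positivity) (fun _ => by positivity)).mul_left
      (c ^ 2)
    exact gp.congr fun q => (hAnorm q).symm
  -- the lp function
  set F : ∀ _ : J, ℂ := fun p =>
    if hp : 0 ≤ (p : ℤ × ℤ).1 ∧ 0 ≤ (p : ℤ × ℤ).2 then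
      (c : ℂ) * (μ ^ (p : ℤ × ℤ).1.toNat * ν ^ (p : ℤ × ℤ).2.toNat) else 0 with hF
  have hFι : ∀ q : ℕ × ℕ, F (ι q) = A q := by
    intro q
    simp only [hF, hiota, hA]
    rw [dif_pos ⟨Int.natCast_nonneg _, Int.natCast_nonneg _⟩]
    simp [Int.toNat_natCast]
  have hFzero : ∀ p : J, p ∉ Set.range ι → F p = 0 := by
    intro p hp
    rw [hF]
    refine dif_neg fun hcon => hp ?_
    refine ⟨((p : ℤ × ℤ).1.toNat, (p : ℤ × ℤ).2.toNat), ?_⟩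
    apply Subtype.ext
    simp only [hiota]
    rw [Int.toNat_of_nonneg hcon.1, Int.toNat_of_nonneg hcon.2]
  have hmem : Memℓp F 2 := by
    apply memℓp_gen
    have h2 : Summable fun p : J => ‖F p‖ ^ 2 := by
      rw [← Function.Injective.summable_iff hι (fun p hp => by rw [hFzero p hp]; simp)]
      exact hsumA.congr fun q => by rw [Function.comp_apply, hFι q]
    refine h2.congr fun p => ?_
    rw [ENNReal.toReal_ofNat]
    rw [← Real.rpow_natCast ‖F p‖ 2]
    norm_num
  set f : HJ J := ⟨F, hmem⟩ with hf
  refine ⟨f, ?_⟩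
  have h0 : HasSum (fun p : J => lp.single 2 p (f p)) f :=
    lp.hasSum_single ENNReal.ofNat_ne_top f
  have hsz : ∀ p : J, lp.single (E := fun _ : J => ℂ) 2 p (0 : ℂ) = 0 := by
    intro p
    have h := lp.single_smul (E := fun _ : J => ℂ) 2 p (1 : ℂ) (0 : ℂ)
    simpa [zero_smul] using h
  have h1 : HasSum ((fun p : J => lp.single (E := fun _ : J => ℂ) 2 p (F p)) ∘ ι) f := by
    rw [Function.Injective.hasSum_iff hι (fun p hp => by rw [hFzero p hp]; exact hsz p)]
    exact h0
  refine h1.congr_fun fun q => ?_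
  rw [Function.comp_apply, hFι q]
  have hs : lp.single (E := fun _ : J => ℂ) 2 (ι q) ((A q) • (1 : ℂ)) =
      (A q) • lp.single (E := fun _ : J => ℂ) 2 (ι q) 1 := lp.single_smul 2 (ι q) (A q) 1
  rw [e, ← hs, smul_eq_mul, mul_one]


/-- For a diagram containing `ℕ²` and `|μ|,|ν| < 1`, the normalized vector
`h = √((1−|μ|²)(1−|ν|²)) Σ μ^i ν^j e_{(i,j)}` is a unit vector with
`⟨M_w h, h⟩ = μ̄` and `⟨M_z h, h⟩ = ν̄` (paper's inner product, linear in the first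
variable, is `⟪h, ·⟫` in Mathlib's convention); consequently the closure of the joint
numerical range of `(M_w, M_z)` is the closed bidisc. -/
theorem stmt9 (J : Set (ℤ × ℤ)) (hJ : IsDiagram J)
    (hN : ∀ p : ℤ × ℤ, 0 ≤ p.1 → 0 ≤ p.2 → p ∈ J)
    (Mw Mz : HJ J →L[ℂ] HJ J) (hMw : IsShiftW J Mw) (hMz : IsShiftZ J Mz)
    (μ ν : ℂ) (hμ : ‖μ‖ < 1) (hν : ‖ν‖ < 1) (h : HJ J)
    (hh : HasSum (fun q : ℕ × ℕ =>
      ((Real.sqrt ((1 - ‖μ‖ ^ 2) * (1 - ‖ν‖ ^ 2)) : ℂ) * (μ ^ q.1 * ν ^ q.2)) •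
        e J ⟨((q.1 : ℤ), (q.2 : ℤ)),
          hN ((q.1 : ℤ), (q.2 : ℤ)) (Int.natCast_nonneg _) (Int.natCast_nonneg _)⟩) h) :
    ‖h‖ = 1 ∧
    ⟪h, Mw h⟫_ℂ = starRingEnd ℂ μ ∧
    ⟪h, Mz h⟫_ℂ = starRingEnd ℂ ν ∧
    closure {p : ℂ × ℂ | ∃ x : HJ J, ‖x‖ = 1 ∧ p.1 = ⟪x, Mw x⟫_ℂ ∧ p.2 = ⟪x, Mz x⟫_ℂ} =
      {p : ℂ × ℂ | ‖p.1‖ ≤ 1 ∧ ‖p.2‖ ≤ 1} := by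
  obtain ⟨hn, hw, hz⟩ := main_core J hN Mw Mz hMw hMz μ ν hμ hν h hh
  refine ⟨hn, hw, hz, ?_⟩
  -- isometries
  have hMwnorm : ∀ x : HJ J, ‖Mw x‖ = ‖x‖ := by
    have hσmem : ∀ p : J, ((p : ℤ × ℤ).1 + 1, (p : ℤ × ℤ).2) ∈ J := by
      intro p
      have := hJ (p : ℤ × ℤ) p.2 1 0
      simpa using this
    refine shift_norm J Mw (fun p => ⟨((p : ℤ × ℤ).1 + 1, (p : ℤ × ℤ).2), hσmem p⟩)
      ?_ (fun p => hMw (p : ℤ × ℤ) p.2 (hσmem p))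
    intro a b hab
    simp only [Subtype.ext_iff, Prod.ext_iff] at hab ⊢
    omega
  have hMznorm : ∀ x : HJ J, ‖Mz x‖ = ‖x‖ := by
    have hσmem : ∀ p : J, ((p : ℤ × ℤ).1, (p : ℤ × ℤ).2 + 1) ∈ J := by
      intro p
      have := hJ (p : ℤ × ℤ) p.2 0 1
      simpa using this
    refine shift_norm J Mz (fun p => ⟨((p : ℤ × ℤ).1, (p : ℤ × ℤ).2 + 1), hσmem p⟩)
      ?_ (fun p => hMz (p : ℤ × ℤ) p.2 (hσmem p))
    intro a b hab
    simp only [Subtype.ext_iff, Prod.ext_iff] at hab ⊢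
    omega
  apply Set.Subset.antisymm
  · refine closure_minimal ?_ ?_
    · rintro ⟨p1, p2⟩ ⟨x, hx1, hxw, hxz⟩
      constructor
      · rw [hxw]
        calc ‖⟪x, Mw x⟫_ℂ‖ ≤ ‖x‖ * ‖Mw x‖ := norm_inner_le_norm x (Mw x)
          _ = 1 := by rw [hMwnorm, hx1, one_mul]
      · rw [hxz]
        calc ‖⟪x, Mz x⟫_ℂ‖ ≤ ‖x‖ * ‖Mz x‖ := norm_inner_le_norm x (Mz x)
          _ = 1 := by rw [hMznorm, hx1, one_mul]
    · exact (isClosed_le (continuous_norm.comp continuous_fst) continuous_const).inter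
        (isClosed_le (continuous_norm.comp continuous_snd) continuous_const)
  · have hopen : Metric.ball (0 : ℂ) 1 ×ˢ Metric.ball (0 : ℂ) 1 ⊆
        {p : ℂ × ℂ | ∃ x : HJ J, ‖x‖ = 1 ∧ p.1 = ⟪x, Mw x⟫_ℂ ∧ p.2 = ⟪x, Mz x⟫_ℂ} := by
      rintro ⟨p1, p2⟩ ⟨hp1, hp2⟩
      rw [Set.mem_setOf_eq] at *
      rw [mem_ball_zero_iff] at hp1 hp2
      have hμ' : ‖(starRingEnd ℂ) p1‖ < 1 := by rwa [RCLike.norm_conj]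
      have hν' : ‖(starRingEnd ℂ) p2‖ < 1 := by rwa [RCLike.norm_conj]
      obtain ⟨x, hx⟩ := exists_h J hN ((starRingEnd ℂ) p1) ((starRingEnd ℂ) p2) hμ' hν'
      obtain ⟨hn', hw', hz'⟩ := main_core J hN Mw Mz hMw hMz _ _ hμ' hν' x hx
      refine ⟨x, hn', ?_, ?_⟩
      · rw [hw', RingHomCompTriple.comp_apply]
        simp
      · rw [hz', RingHomCompTriple.comp_apply]
        simp
    have hbid : {p : ℂ × ℂ | ‖p.1‖ ≤ 1 ∧ ‖p.2‖ ≤ 1} =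
        closure (Metric.ball (0 : ℂ) 1 ×ˢ Metric.ball (0 : ℂ) 1) := by
      rw [closure_prod_eq, closure_ball (0 : ℂ) one_ne_zero]
      ext p
      simp [Set.mem_prod, mem_closedBall_zero_iff]
    rw [hbid]
    exact closure_mono hopen


end TaylorDiagram
end
end

section
/- For k ≥ 1 let T_k ∈ B(ℂ^k) be the truncated shift of index k (T_k maps the j-th standard basis vector to the (j+1)-st for j < k and the k-th to 0), so σ(T_k) = {0}. Let (k_i)_{i≥0} be a strictly increasing sequence of positive integers and let T = ⊕_{i≥0} T_{k_i} be the orthogonal direct sum acting on the Hilbert space ⊕_{i≥0} ℂ^{k_i} (the ℓ²-direct sum). Then for every λ ∈ ℂ with 0 < |λ| ≤ 1 the range of λ − T is not closed; consequently σ(T) equals the closed unit disc. -/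
open scoped ENNReal NNReal

set_option maxHeartbeats 1000000
set_option synthInstance.maxHeartbeats 400000
set_option linter.unreachableTactic false
set_option linter.unusedTactic false

noncomputable section

namespace TruncShift

/-- `S` is the truncated shift of index `n` on `ℂⁿ`: it maps the `j`-th standard basis
vector to the `(j+1)`-st for `j < n − 1` and the last one to `0`; in coordinates,
`(S v)_0 = 0` and `(S v)_j = v_{j−1}` for `j ≥ 1`. -/
def IsTruncShift {n : ℕ} (S : EuclideanSpace ℂ (Fin n) →L[ℂ] EuclideanSpace ℂ (Fin n)) :
    Prop :=
  ∀ (v : EuclideanSpace ℂ (Fin n)) (j : Fin n),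
    S v j = if hj : (j : ℕ) = 0 then 0 else v ⟨(j : ℕ) - 1, by have := j.isLt; omega⟩

lemma sum_shift_le {n : ℕ} (g : Fin n → ℝ) (hg : ∀ j, 0 ≤ g j) :
    ∑ j : Fin n, (if _h : (j : ℕ) = 0 then (0:ℝ) else
      g ⟨(j : ℕ) - 1, by have := j.isLt; omega⟩) ≤ ∑ j : Fin n, g j := by
  set G : ℕ → ℝ := fun m => if h : m < n then g ⟨m, h⟩ else 0 with hGdef
  have hGnn : ∀ m, 0 ≤ G m := by
    intro m; simp only [hGdef]; split_ifs
    · exact hg _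
    · exact le_rfl
  have hR : ∑ j : Fin n, g j = ∑ m ∈ Finset.range n, G m := by
    rw [← Fin.sum_univ_eq_sum_range G n]
    refine Finset.sum_congr rfl fun j _ => ?_
    simp only [hGdef, j.isLt, dif_pos, Fin.eta]
  have hL : ∑ j : Fin n, (if _h : (j : ℕ) = 0 then (0:ℝ) else
      g ⟨(j : ℕ) - 1, by have := j.isLt; omega⟩)
      = ∑ m ∈ Finset.range n, (if m = 0 then (0:ℝ) else G (m-1)) := by
    rw [← Fin.sum_univ_eq_sum_range (fun m => if m = 0 then (0:ℝ) else G (m-1)) n]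
    refine Finset.sum_congr rfl fun j _ => ?_
    by_cases h : (j : ℕ) = 0
    · simp [h]
    · have h1 : (j : ℕ) - 1 < n := by have := j.isLt; omega
      simp [h, hGdef, h1]
  rw [hR, hL]
  rcases Nat.eq_zero_or_pos n with h0 | h0
  · subst h0; simp
  · obtain ⟨m, rfl⟩ : ∃ m, n = m + 1 := ⟨n - 1, by omega⟩
    rw [Finset.sum_range_succ' (fun m => if m = 0 then (0:ℝ) else G (m-1)) m,
      Finset.sum_range_succ G m]
    simp only [Nat.succ_ne_zero, if_false, Nat.add_sub_cancel, if_pos, add_zero]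
    exact le_add_of_nonneg_right (hGnn m)


lemma pow_apply {n : ℕ} {S : EuclideanSpace ℂ (Fin n) →L[ℂ] EuclideanSpace ℂ (Fin n)}
    (hS : IsTruncShift S) (m : ℕ) (v : EuclideanSpace ℂ (Fin n)) (j : Fin n) :
    (S ^ m) v j = if h : (j : ℕ) < m then 0
      else v ⟨(j : ℕ) - m, by have := j.isLt; omega⟩ := by
  induction m generalizing v with
  | zero =>
    simp only [pow_zero, ContinuousLinearMap.one_apply, Nat.not_lt_zero, dif_neg,
      not_false_iff]
    exact congrArg (fun t => v t) (Fin.ext (by simp))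
  | succ m ih =>
    have : (S ^ (m + 1)) v = (S ^ m) (S v) := by
      rw [pow_succ]
      rfl
    rw [this, ih (S v)]
    by_cases h1 : (j : ℕ) < m
    · rw [dif_pos h1, dif_pos (by omega)]
    · rw [dif_neg h1, hS v]
      by_cases h2 : (j : ℕ) - m = 0
      · rw [dif_pos h2, dif_pos (by omega)]
      · rw [dif_neg h2, dif_neg (by omega)]
        exact congrArg (fun t => v t) (Fin.ext (show (j:ℕ) - m - 1 = (j:ℕ) - (m+1) by omega))

lemma isNilpotent {n : ℕ} {S : EuclideanSpace ℂ (Fin n) →L[ℂ] EuclideanSpace ℂ (Fin n)}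
    (hS : IsTruncShift S) : S ^ n = 0 := by
  ext v j
  rw [pow_apply hS n v j, dif_pos j.isLt]
  simp

lemma spec_trunc {n : ℕ} (S : EuclideanSpace ℂ (Fin n) →L[ℂ] EuclideanSpace ℂ (Fin n))
    (hn : 1 ≤ n) (hS : IsTruncShift S) : spectrum ℂ S = {0} := by
  have hnt : Nontrivial (EuclideanSpace ℂ (Fin n)) := by
    refine ⟨EuclideanSpace.single ⟨0, hn⟩ 1, 0, fun h => ?_⟩
    have := congrFun (congrArg (fun x : EuclideanSpace ℂ (Fin n) => (x : Fin n → ℂ)) h) ⟨0, hn⟩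
    simp [EuclideanSpace.single_apply] at this
  have hsub : spectrum ℂ S ⊆ {0} := by
    intro lam hlam
    by_contra hne
    have hlam0 : lam ≠ 0 := hne
    have hnil : IsNilpotent ((lam⁻¹ : ℂ) • S) :=
      ⟨n, by
        rw [smul_pow, isNilpotent hS]
        ext w j
        simp [ContinuousLinearMap.smul_apply]⟩
    have hu : IsUnit (1 - (lam⁻¹ : ℂ) • S) := hnil.isUnit_one_sub
    have hl : IsUnit (algebraMap ℂ (EuclideanSpace ℂ (Fin n) →L[ℂ] EuclideanSpace ℂ (Fin n)) lam) :=
      (Ne.isUnit hlam0).map (algebraMap ℂ _)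
    have := hl.mul hu
    rw [Algebra.algebraMap_eq_smul_one, smul_mul_assoc, one_mul, smul_sub, smul_smul,
      mul_inv_cancel₀ hlam0, one_smul] at this
    rw [← Algebra.algebraMap_eq_smul_one] at this
    exact (spectrum.notMem_iff.mpr this) hlam
  obtain ⟨x, hx⟩ := spectrum.nonempty S
  have hx0 : x = 0 := hsub hx
  subst hx0
  exact Set.Subset.antisymm hsub (Set.singleton_subset_iff.mpr hx)


section Main
variable (k : ℕ → ℕ)

abbrev E := fun i : ℕ => EuclideanSpace ℂ (Fin (k i))
abbrev H := lp (E k) 2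

lemma coords (T : H k →L[ℂ] H k) (lam : ℂ) (x : H k) (i : ℕ) (j : Fin (k i)) :
    ((lam • (1 : H k →L[ℂ] H k) - T) x) i j = lam * x i j - T x i j := by
  rw [ContinuousLinearMap.sub_apply, ContinuousLinearMap.smul_apply,
    ContinuousLinearMap.one_apply]
  have h1 : ((lam • x - T x : H k) : ∀ i, E k i) i = lam • (x i) - (T x) i := by
    rw [lp.coeFn_sub, lp.coeFn_smul]
    rfl
  calc ((lam • x - T x : H k) : ∀ i, E k i) i j = (lam • (x i) - (T x) i) j := by rw [h1]
    _ = lam * x i j - T x i j := rfl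

end Main

end TruncShift

namespace TruncShift
section Main2
variable {k : ℕ → ℕ} (hk : ∀ i, 1 ≤ k i)
variable (T : H k →L[ℂ] H k)
variable (hT : ∀ (x : H k) (i : ℕ) (j : Fin (k i)),
      T x i j = if hj : (j : ℕ) = 0 then 0 else x i ⟨(j : ℕ) - 1, Nat.lt_of_le_of_lt (Nat.sub_le _ _) j.isLt⟩)

include hT in
lemma injA {lam : ℂ} (hlam : lam ≠ 0) :
    Function.Injective ⇑(lam • (1 : H k →L[ℂ] H k) - T) := by
  set A := lam • (1 : H k →L[ℂ] H k) - T with hA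
  have hker : ∀ x : H k, A x = 0 → x = 0 := by
    intro x hx
    have hco : ∀ (i : ℕ) (j : Fin (k i)), lam * x i j - T x i j = 0 := by
      intro i j
      have := congrArg (fun z : E k i => z j) (congrFun (congrArg (fun z : H k => (z : ∀ i, E k i)) hx) i)
      rw [← coords k T lam x i j]
      simpa [hA] using this
    have hzero : ∀ (i : ℕ) (m : ℕ) (hm : m < k i), x i ⟨m, hm⟩ = 0 := by
      intro i m
      induction m using Nat.strong_induction_on with
      | _ m ih =>
        intro hm
        have h1 := hco i ⟨m, hm⟩
        rw [hT x i ⟨m, hm⟩] at h1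
        rcases Nat.eq_zero_or_pos m with h0 | h0
        · subst h0
          rw [dif_pos rfl, sub_zero] at h1
          exact (mul_eq_zero.mp h1).resolve_left hlam
        · rw [dif_neg (show ¬((⟨m, hm⟩ : Fin (k i)) : ℕ) = 0 from by simp; omega)] at h1
          have h2 : x i ⟨m - 1, lt_of_le_of_lt (Nat.sub_le m 1) hm⟩ = 0 :=
            ih (m - 1) (Nat.sub_lt h0 one_pos) (lt_of_le_of_lt (Nat.sub_le m 1) hm)
          rw [h2, sub_zero] at h1
          exact (mul_eq_zero.mp h1).resolve_left hlam
    apply lp.ext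
    funext i
    ext j
    have := hzero i j (j.isLt)
    simpa [Fin.eta] using this
  intro x y hxy
  have : A (x - y) = 0 := by rw [map_sub, hxy, sub_self]
  have := hker _ this
  exact sub_eq_zero.mp this

include hk hT in
lemma keyAx {lam : ℂ} (hlam : lam ≠ 0) (i : ℕ) :
    (lam • (1 : H k →L[ℂ] H k) - T) (lp.single 2 i (WithLp.toLp 2 (fun j : Fin (k i) => lam⁻¹ ^ (j : ℕ)) :
        EuclideanSpace ℂ (Fin (k i)))) =
      lp.single 2 i (EuclideanSpace.single (⟨0, hk i⟩ : Fin (k i)) lam) := by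
  set v : EuclideanSpace ℂ (Fin (k i)) := WithLp.toLp 2 (fun j : Fin (k i) => lam⁻¹ ^ (j : ℕ)) with hv
  set w : EuclideanSpace ℂ (Fin (k i)) := EuclideanSpace.single (⟨0, hk i⟩ : Fin (k i)) lam
    with hw
  set x : H k := lp.single 2 i v with hxdef
  apply lp.ext
  funext i'
  ext j
  rw [coords k T lam x i' j, hT x i' j]
  by_cases hi : i' = i
  · subst hi
    have hx : (x : ∀ i'', E k i'') i' = v := by
      rw [hxdef]; exact lp.single_apply_self (E := E k) 2 i' v
    have hws : ((lp.single 2 i' w : H k) : ∀ i'', E k i'') i' = w :=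
      lp.single_apply_self (E := E k) 2 i' w
    rw [hws, hx]
    by_cases hj : (j : ℕ) = 0
    · rw [dif_pos hj, sub_zero, hw]
      have hj' : j = ⟨0, hk i'⟩ := Fin.ext hj
      rw [hj', EuclideanSpace.single_apply, if_pos rfl]
      show lam * lam⁻¹ ^ (0 : ℕ) = lam
      simp
    · rw [dif_neg hj, hw, EuclideanSpace.single_apply,
        if_neg (fun h => hj (by rw [h]))]
      show lam * lam⁻¹ ^ (j : ℕ) - lam⁻¹ ^ ((j : ℕ) - 1) = 0
      have h1 : (j : ℕ) = ((j : ℕ) - 1) + 1 := by omega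
      rw [h1, pow_succ]
      field_simp
      simp
  · have hx : (x : ∀ i'', E k i'') i' = 0 := by
      rw [hxdef]; exact lp.single_apply_ne (E := E k) 2 i v hi
    have hws : ((lp.single 2 i w : H k) : ∀ i'', E k i'') i' = 0 :=
      lp.single_apply_ne (E := E k) 2 i w hi
    rw [hws, hx]
    have h0 : ∀ j' : Fin (k i'), (0 : E k i') j' = 0 := fun _ => rfl
    by_cases hj : (j : ℕ) = 0
    · rw [dif_pos hj, h0, sub_zero, mul_zero]
    · rw [dif_neg hj, h0, h0, mul_zero, sub_zero]


include hk hT in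
lemma notClosed (hmono : StrictMono k) {lam : ℂ} (hlam0 : 0 < ‖lam‖) (hlam1 : ‖lam‖ ≤ 1) :
    ¬ IsClosed ((LinearMap.range (lam • (1 : H k →L[ℂ] H k) - T).toLinearMap :
        Submodule ℂ (H k)) : Set (H k)) := by
  intro hcl
  set A := lam • (1 : H k →L[ℂ] H k) - T with hA
  have hlam : lam ≠ 0 := by
    intro h; rw [h] at hlam0; simp at hlam0
  have hinj : Function.Injective ⇑A := injA T hT hlam
  have hclr : IsClosed (Set.range ⇑A) := by rwa [LinearMap.coe_range] at hcl
  set e := A.equivRange hinj hclr with he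
  set K : ℝ≥0 := ‖(e.symm : ↥(LinearMap.range A.toLinearMap) →L[ℂ] H k)‖₊ with hK
  have hbound : ∀ y : H k, ‖y‖ ≤ (K : ℝ) * ‖A y‖ := by
    intro y
    have h1 := e.antilipschitz.le_mul_dist y 0
    rw [dist_zero_right] at h1
    have hco : ∀ z : H k, ((e z : H k)) = A z := by
      intro z
      have h3 : e z = A.rangeRestrict z := congrFun (A.coe_equivRange hinj hclr) z
      rw [h3]; rfl
    have h2 : dist (e y) (e 0) = ‖A y‖ := by
      rw [Subtype.dist_eq, hco y, hco 0, map_zero, dist_zero_right]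
    rw [h2] at h1
    exact h1
  have hp2 : (0 : ℝ) < (2 : ℝ≥0∞).toReal := by norm_num
  have hsingle_norm : ∀ (i : ℕ) (u : E k i), ‖(lp.single 2 i u : H k)‖ = ‖u‖ := by
    intro i u
    exact lp.norm_single (E := E k) (p := 2) (by norm_num) i u
  obtain ⟨N, hN⟩ := exists_nat_gt ((K : ℝ) ^ 2)
  set v : EuclideanSpace ℂ (Fin (k N)) := WithLp.toLp 2 (fun j : Fin (k N) => lam⁻¹ ^ (j : ℕ)) with hv
  set x : H k := lp.single 2 N v with hxdef
  have hone : (1 : ℝ) ≤ ‖lam⁻¹‖ := by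
    rw [norm_inv]
    exact (one_le_inv₀ hlam0).mpr hlam1
  have hlow : Real.sqrt (k N) ≤ ‖v‖ := by
    rw [EuclideanSpace.norm_eq v]
    apply Real.sqrt_le_sqrt
    have hterm : ∀ j : Fin (k N), (1 : ℝ) ≤ ‖v j‖ ^ 2 := by
      intro j
      have h1 : (1 : ℝ) ≤ ‖v j‖ := by
        show (1 : ℝ) ≤ ‖lam⁻¹ ^ (j : ℕ)‖
        rw [norm_pow]
        exact one_le_pow₀ hone
      nlinarith
    calc ((k N : ℝ)) = (Finset.univ : Finset (Fin (k N))).card • (1 : ℝ) := by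
          simp
      _ ≤ ∑ j : Fin (k N), ‖v j‖ ^ 2 :=
          Finset.card_nsmul_le_sum _ _ _ (fun j _ => hterm j)
  have hxn : Real.sqrt (k N) ≤ ‖x‖ := by
    rw [hxdef, hsingle_norm N v]
    exact hlow
  have hAx : ‖A x‖ = ‖lam‖ := by
    rw [hA, hxdef, keyAx hk T hT hlam N, hsingle_norm, EuclideanSpace.norm_single]
  have h5 : Real.sqrt (k N) ≤ (K : ℝ) := by
    calc Real.sqrt (k N) ≤ ‖x‖ := hxn
      _ ≤ (K : ℝ) * ‖A x‖ := hbound x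
      _ = (K : ℝ) * ‖lam‖ := by rw [hAx]
      _ ≤ (K : ℝ) * 1 := mul_le_mul_of_nonneg_left hlam1 K.coe_nonneg
      _ = (K : ℝ) := mul_one _
  have h6 : (K : ℝ) < Real.sqrt N := (Real.lt_sqrt K.coe_nonneg).mpr (by exact_mod_cast hN)
  have h7 : Real.sqrt (N : ℝ) ≤ Real.sqrt (k N) := by
    apply Real.sqrt_le_sqrt
    exact_mod_cast hmono.le_apply
  linarith

end Main2

section Final
variable {k : ℕ → ℕ} (hk : ∀ i, 1 ≤ k i)
variable (T : H k →L[ℂ] H k)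
variable (hT : ∀ (x : H k) (i : ℕ) (j : Fin (k i)),
      T x i j = if hj : (j : ℕ) = 0 then 0 else x i ⟨(j : ℕ) - 1, Nat.lt_of_le_of_lt (Nat.sub_le _ _) j.isLt⟩)

include hT in
lemma normTle (x : H k) : ‖T x‖ ≤ ‖x‖ := by
  have hp2 : (0 : ℝ) < (2 : ℝ≥0∞).toReal := by norm_num
  apply lp.norm_le_of_forall_sum_le hp2 (norm_nonneg x)
  intro s
  have hcomp : ∀ i, ‖(T x : ∀ i, E k i) i‖ ≤ ‖x i‖ := by
    intro i
    rw [EuclideanSpace.norm_eq, EuclideanSpace.norm_eq]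
    apply Real.sqrt_le_sqrt
    have hterm : ∀ j : Fin (k i), ‖(T x : ∀ i, E k i) i j‖ ^ 2 =
        (if _h : (j : ℕ) = 0 then (0 : ℝ)
          else ‖x i ⟨(j : ℕ) - 1, by have := j.isLt; omega⟩‖ ^ 2) := by
      intro j
      rw [hT x i j]
      by_cases hj : (j : ℕ) = 0
      · rw [dif_pos hj, dif_pos hj]
        simp
      · rw [dif_neg hj, dif_neg hj]
    rw [Finset.sum_congr rfl (fun j _ => hterm j)]
    exact sum_shift_le (fun j' => ‖x i j'‖ ^ 2) (fun j' => sq_nonneg _)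
  calc ∑ i ∈ s, ‖(T x : ∀ i, E k i) i‖ ^ (2 : ℝ≥0∞).toReal
      ≤ ∑ i ∈ s, ‖x i‖ ^ (2 : ℝ≥0∞).toReal := by
        apply Finset.sum_le_sum
        intro i _
        exact Real.rpow_le_rpow (norm_nonneg _) (hcomp i) (by norm_num)
    _ ≤ ‖x‖ ^ (2 : ℝ≥0∞).toReal := lp.sum_rpow_le_norm_rpow hp2 x s

include hk hT in
lemma specT (hmono : StrictMono k) :
    spectrum ℂ T = Metric.closedBall (0 : ℂ) 1 := by
  apply Set.Subset.antisymm
  · have h1le : ‖(1 : H k →L[ℂ] H k)‖ ≤ 1 := by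
      rw [ContinuousLinearMap.one_def]
      exact ContinuousLinearMap.norm_id_le
    have hT1 : ‖T‖ ≤ 1 := T.opNorm_le_bound zero_le_one (fun x => by
      rw [one_mul]; exact normTle T hT x)
    refine (spectrum.subset_closedBall_norm_mul T).trans
      (Metric.closedBall_subset_closedBall ?_)
    calc ‖T‖ * ‖(1 : H k →L[ℂ] H k)‖ ≤ 1 * 1 :=
          mul_le_mul hT1 h1le (norm_nonneg _) zero_le_one
      _ = 1 := mul_one 1
  · intro lam hmem
    have hlam1 : ‖lam‖ ≤ 1 := by rwa [Metric.mem_closedBall, dist_zero_right] at hmem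
    by_cases h0 : lam = 0
    · subst h0
      rw [spectrum.mem_iff]
      intro hu
      rw [map_zero, zero_sub] at hu
      obtain ⟨u, hu⟩ := hu
      set y : H k := lp.single 2 0 (EuclideanSpace.single (⟨0, hk 0⟩ : Fin (k 0)) (1 : ℂ))
        with hy
      have hs : (-T) ((↑u⁻¹ : H k →L[ℂ] H k) y) = y := by
        calc (-T) ((↑u⁻¹ : H k →L[ℂ] H k) y)
            = ((↑u * ↑u⁻¹ : H k →L[ℂ] H k)) y := by rw [hu]; rfl
          _ = y := by rw [u.mul_inv]; rfl
      have h1 : (y : ∀ i, E k i) 0 ⟨0, hk 0⟩ = 1 := by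
        rw [hy]
        rw [lp.single_apply_self (E := E k) 2 0]
        rw [EuclideanSpace.single_apply, if_pos rfl]
      have h2 : ((-T) ((↑u⁻¹ : H k →L[ℂ] H k) y) : ∀ i, E k i) 0 ⟨0, hk 0⟩ = 0 := by
        set z := (↑u⁻¹ : H k →L[ℂ] H k) y with hz
        have hneg : ((-T) z : ∀ i, E k i) 0 ⟨0, hk 0⟩ = -(T z 0 ⟨0, hk 0⟩) := by
          rw [ContinuousLinearMap.neg_apply, lp.coeFn_neg]
          rfl
        rw [hneg, hT z 0 ⟨0, hk 0⟩, dif_pos rfl, neg_zero]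
      rw [hs, h1] at h2
      exact one_ne_zero h2
    · have hlam0 : 0 < ‖lam‖ := norm_pos_iff.mpr h0
      by_contra hns
      have hu : IsUnit (algebraMap ℂ (H k →L[ℂ] H k) lam - T) := spectrum.notMem_iff.mp hns
      rw [Algebra.algebraMap_eq_smul_one] at hu
      obtain ⟨u, hu⟩ := hu
      have hsurj : Function.Surjective ⇑(lam • (1 : H k →L[ℂ] H k) - T) := by
        intro y
        refine ⟨(↑u⁻¹ : H k →L[ℂ] H k) y, ?_⟩
        calc (lam • (1 : H k →L[ℂ] H k) - T) ((↑u⁻¹ : H k →L[ℂ] H k) y)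
            = ((↑u * ↑u⁻¹ : H k →L[ℂ] H k)) y := by rw [hu]; rfl
          _ = y := by rw [u.mul_inv]; rfl
      have hr : LinearMap.range (lam • (1 : H k →L[ℂ] H k) - T).toLinearMap = ⊤ :=
        LinearMap.range_eq_top.mpr hsurj
      apply notClosed hk T hT hmono hlam0 hlam1
      rw [hr, Submodule.top_coe]
      exact isClosed_univ

end Final

/-- The spectrum of a truncated shift is `{0}`; and if `(k_i)` is a strictly increasing
sequence of positive integers and `T = ⊕ T_{k_i}` is the ℓ²-direct sum of the truncated
shifts of indices `k_i`, then for every `λ` with `0 < |λ| ≤ 1` the range of `λ − T` is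
not closed; consequently `σ(T)` is the closed unit disc. -/
theorem stmt14 (k : ℕ → ℕ) (hk : ∀ i, 1 ≤ k i) (hmono : StrictMono k)
    (T : lp (fun i : ℕ => EuclideanSpace ℂ (Fin (k i))) 2 →L[ℂ]
          lp (fun i : ℕ => EuclideanSpace ℂ (Fin (k i))) 2)
    (hT : ∀ (x : lp (fun i : ℕ => EuclideanSpace ℂ (Fin (k i))) 2) (i : ℕ)
        (j : Fin (k i)),
      T x i j = if hj : (j : ℕ) = 0 then 0 else x i ⟨(j : ℕ) - 1, by have := j.isLt; omega⟩) :
    (∀ (n : ℕ) (S : EuclideanSpace ℂ (Fin n) →L[ℂ] EuclideanSpace ℂ (Fin n)),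
      1 ≤ n → IsTruncShift S → spectrum ℂ S = {0}) ∧
    (∀ lam : ℂ, 0 < ‖lam‖ → ‖lam‖ ≤ 1 →
      ¬ IsClosed ((LinearMap.range ((lam • (1 : lp (fun i : ℕ =>
            EuclideanSpace ℂ (Fin (k i))) 2 →L[ℂ] lp (fun i : ℕ => EuclideanSpace ℂ (Fin (k i))) 2) - T).toLinearMap) :
          Submodule ℂ (lp (fun i : ℕ => EuclideanSpace ℂ (Fin (k i))) 2)) :
            Set (lp (fun i : ℕ => EuclideanSpace ℂ (Fin (k i))) 2))) ∧
    spectrum ℂ T = Metric.closedBall (0 : ℂ) 1 := by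
  refine ⟨fun n S hn hS => spec_trunc S hn hS, ?_, ?_⟩
  · intro lam h0 h1
    exact notClosed hk T hT hmono h0 h1
  · exact specT hk T hT hmono

end TruncShift
end
end
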